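/- Let H be a finite-dimensional real inner product space, let A be a self-adjoint operator on H with A ≥ δI for some δ > 0, and let α ∈ (0,1). Then the Balakrishnan integral representation holds: A^{−α} = (sin(απ)/π) ∫₀^∞ θ^{−α} (A + θI)⁻¹ dθ, where A^{−α} is the fractional power of the invertible operator A defined by the spectral theorem and the integral is a convergent improper operator-valued (Bochner) integral. -/

import Mathlib

open scoped RealInnerProductSpace
open MeasureTheory
open Set Real

-- auxiliary scalar lemmas

lemma beta_real {α : ℝ} (hα : α ∈ Set.Ioo (0:ℝ) 1) :
    ∫ x in (0:ℝ)..1, x ^ (-α) * (1 - x) ^ (α - 1) = π / Real.sin (π * α) := by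
  obtain ⟨h0, h1⟩ := hα
  have hs : (0:ℝ) < 1 - α := by linarith
  have hbeta := Complex.Gamma_mul_Gamma_eq_betaIntegral
    (s := ((1 - α : ℝ) : ℂ)) (t := ((α : ℝ) : ℂ)) (by simpa using hs) (by simpa using h0)
  rw [show ((1-α:ℝ):ℂ) + ((α:ℝ):ℂ) = 1 by push_cast; ring, Complex.Gamma_one, one_mul] at hbeta
  have hint : Complex.betaIntegral ((1-α:ℝ):ℂ) ((α:ℝ):ℂ)
      = ((∫ x in (0:ℝ)..1, x ^ (-α) * (1 - x) ^ (α - 1) : ℝ) : ℂ) := by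
    rw [Complex.betaIntegral, ← intervalIntegral.integral_ofReal]
    refine intervalIntegral.integral_congr fun x hx => ?_
    rw [Set.uIcc_of_le zero_le_one] at hx
    obtain ⟨hx0, hx1⟩ := hx
    push_cast
    rw [Complex.ofReal_cpow hx0, Complex.ofReal_cpow (by linarith : (0:ℝ) ≤ 1 - x)]
    push_cast
    ring_nf
  rw [hint, Complex.Gamma_ofReal, Complex.Gamma_ofReal] at hbeta
  have := Real.Gamma_mul_Gamma_one_sub α
  rw [← Complex.ofReal_inj]
  rw [← hbeta]
  push_cast [← Complex.ofReal_sin]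
  norm_cast
  rw [mul_comm]
  exact this

lemma key_integrable {α : ℝ} (hα : α ∈ Set.Ioo (0:ℝ) 1) {μ : ℝ} (hμ : 0 < μ) :
    IntegrableOn (fun θ : ℝ => θ ^ (-α) * (μ + θ)⁻¹) (Ioi 0) := by
  obtain ⟨h0, h1⟩ := hα
  have hm : Measurable fun θ : ℝ => θ ^ (-α) * (μ + θ)⁻¹ :=
    (measurable_id.pow_const _).mul (measurable_const.add measurable_id).inv
  have hsplit : Ioi (0:ℝ) = Ioc 0 1 ∪ Ioi 1 := by
    rw [Ioc_union_Ioi_eq_Ioi zero_le_one]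
  rw [hsplit]
  refine IntegrableOn.union ?_ ?_
  · rw [integrableOn_Ioc_iff_integrableOn_Ioo]

    have hg : IntegrableOn (fun θ : ℝ => μ⁻¹ * θ ^ (-α)) (Ioo (0:ℝ) 1) :=
      ((intervalIntegral.integrableOn_Ioo_rpow_iff zero_lt_one).mpr (by linarith)).const_mul _
    refine hg.mono' hm.aestronglyMeasurable.restrict ?_
    filter_upwards [ae_restrict_mem measurableSet_Ioo] with θ hθ
    obtain ⟨hθ0, hθ1⟩ := hθ
    have h1 : (0:ℝ) < θ ^ (-α) := Real.rpow_pos_of_pos hθ0 _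
    have h2 : (0:ℝ) < (μ + θ)⁻¹ := by positivity
    rw [Real.norm_eq_abs, abs_of_pos (by positivity)]
    rw [mul_comm μ⁻¹]
    gcongr
    linarith
  · have hg : IntegrableOn (fun θ : ℝ => θ ^ (-α - 1)) (Ioi (1:ℝ)) :=
      integrableOn_Ioi_rpow_of_lt (by linarith) zero_lt_one
    refine hg.mono' hm.aestronglyMeasurable.restrict ?_
    filter_upwards [ae_restrict_mem measurableSet_Ioi] with θ hθ
    have hθ0 : (0:ℝ) < θ := lt_trans zero_lt_one hθ
    rw [Real.norm_eq_abs, abs_of_pos (by positivity)]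
    rw [Real.rpow_sub hθ0, Real.rpow_one, div_eq_mul_inv]
    gcongr
    linarith

lemma key_value_one {α : ℝ} (hα : α ∈ Set.Ioo (0:ℝ) 1) :
    ∫ θ in Ioi (0:ℝ), θ ^ (-α) * (1 + θ)⁻¹ = π / Real.sin (π * α) := by
  obtain ⟨h0, h1⟩ := hα
  have hs : MeasurableSet (Ioo (0:ℝ) 1) := measurableSet_Ioo
  set f : ℝ → ℝ := fun x => x / (1 - x) with hf
  set f' : ℝ → ℝ := fun x => ((1 - x) ^ 2)⁻¹ with hf'
  have himg : f '' Ioo 0 1 = Ioi (0:ℝ) := by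
    ext t
    constructor
    · rintro ⟨x, ⟨hx0, hx1⟩, rfl⟩
      exact div_pos hx0 (by linarith)
    · intro ht
      rw [mem_Ioi] at ht
      refine ⟨t / (1 + t), ⟨div_pos ht (by linarith), ?_⟩, ?_⟩
      · rw [div_lt_one (by linarith)]; linarith
      · simp only [hf]
        rw [div_eq_iff]
        · field_simp; ring
        · intro h
          have : 1 - t / (1 + t) = (1:ℝ) / (1 + t) := by field_simp; ring
          rw [this] at h
          have := one_div_pos.mpr (show (0:ℝ) < 1 + t by linarith)
          linarith
  have hderiv : ∀ x ∈ Ioo (0:ℝ) 1, HasDerivWithinAt f (f' x) (Ioo 0 1) x := by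
    intro x ⟨hx0, hx1⟩
    have hne : 1 - x ≠ 0 := by intro h; linarith
    have h1 : HasDerivAt (fun y : ℝ => (1 - y)⁻¹ - 1) (((1 - x) ^ 2)⁻¹) x := by
      have h2 : HasDerivAt (fun y : ℝ => 1 - y) (-1) x := by
        simpa using (hasDerivAt_id x).const_sub 1
      have := (h2.inv hne).sub_const 1
      refine this.congr_deriv ?_
      ring
    refine (h1.hasDerivWithinAt).congr (fun y ⟨hy0, hy1⟩ => ?_) ?_
    · have hne2 : (1:ℝ) - y ≠ 0 := by intro h; linarith
      simp only [hf]; field_simp; ring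
    · simp only [hf]; field_simp; ring
  have hinj : InjOn f (Ioo 0 1) := by
    intro x ⟨hx0, hx1⟩ y ⟨hy0, hy1⟩ h
    simp only [hf] at h
    rw [div_eq_div_iff (by linarith) (by linarith)] at h
    nlinarith
  have := integral_image_eq_integral_abs_deriv_smul hs hderiv hinj
    (fun t => t ^ (-α) * (1 + t)⁻¹)
  rw [himg] at this
  rw [this]
  have hcong : ∀ x ∈ Ioo (0:ℝ) 1,
      |f' x| • (f x ^ (-α) * (1 + f x)⁻¹) = x ^ (-α) * (1 - x) ^ (α - 1) := by
    intro x ⟨hx0, hx1⟩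
    have hx2 : (0:ℝ) < 1 - x := by linarith
    have e1 : 1 + f x = (1 - x)⁻¹ := by simp only [hf]; field_simp; ring
    have e2 : f x ^ (-α) = x ^ (-α) * (1 - x) ^ α := by
      rw [hf]
      rw [div_rpow hx0.le hx2.le, Real.rpow_neg hx2.le, div_eq_mul_inv, inv_inv]
    rw [e1, e2, smul_eq_mul, abs_of_pos (by positivity), inv_inv,
      Real.rpow_sub hx2, Real.rpow_one]
    simp only [hf']; field_simp
  rw [setIntegral_congr_fun hs hcong]
  rw [← integral_Ioc_eq_integral_Ioo, ← intervalIntegral.integral_of_le zero_le_one]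
  exact beta_real ⟨h0, h1⟩

lemma key_value {α : ℝ} (hα : α ∈ Set.Ioo (0:ℝ) 1) {μ : ℝ} (hμ : 0 < μ) :
    ∫ θ in Ioi (0:ℝ), θ ^ (-α) * (μ + θ)⁻¹ = μ ^ (-α) * (π / Real.sin (π * α)) := by
  have h := integral_comp_mul_left_Ioi (fun θ : ℝ => θ ^ (-α) * (μ + θ)⁻¹) 0 hμ
  rw [mul_zero] at h
  have hx : ∀ x ∈ Ioi (0:ℝ),
      (fun x : ℝ => (μ * x) ^ (-α) * (μ + μ * x)⁻¹) x
        = (μ ^ (-α) * μ⁻¹) * (x ^ (-α) * (1 + x)⁻¹) := by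
    intro x hx
    rw [mem_Ioi] at hx
    have : μ + μ * x = μ * (1 + x) := by ring
    simp only
    rw [Real.mul_rpow hμ.le hx.le, this, mul_inv]
    ring
  rw [setIntegral_congr_fun measurableSet_Ioi hx, MeasureTheory.integral_const_mul,
    key_value_one hα, smul_eq_mul] at h
  have hπ : Real.sin (π * α) ≠ 0 := by
    refine ne_of_gt (Real.sin_pos_of_pos_of_lt_pi ?_ ?_)
    · exact mul_pos Real.pi_pos hα.1
    · nlinarith [Real.pi_pos, hα.2]
  have hμ' : μ ≠ 0 := hμ.ne'
  have := h.symm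
  field_simp at this ⊢
  nlinarith [this]

/-- Balakrishnan integral representation of the negative fractional power:
`A^{−α} = (sin(απ)/π) ∫₀^∞ θ^{−α} (A + θI)⁻¹ dθ`. -/
theorem balakrishnan_formula
    {H : Type*} [NormedAddCommGroup H] [InnerProductSpace ℝ H] [FiniteDimensional ℝ H]
    (A : H →L[ℝ] H)
    (hAsym : ∀ x y : H, ⟪A x, y⟫ = ⟪x, A y⟫)
    (δ : ℝ) (hδ : 0 < δ)
    (hAδ : ∀ x : H, δ * ‖x‖ ^ 2 ≤ ⟪A x, x⟫)
    (α : ℝ) (hα : α ∈ Set.Ioo (0 : ℝ) 1)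
    -- spectral decomposition of `A` and the spectral definition of `A^{−α}`
    (n : ℕ) (e : OrthonormalBasis (Fin n) ℝ H) (μ : Fin n → ℝ)
    (hAe : ∀ k, A (e k) = μ k • e k)
    (Aneg : H →L[ℝ] H)
    (hAneg : ∀ k, Aneg (e k) = (μ k ^ (-α)) • e k) :
    IntegrableOn (fun θ : ℝ => θ ^ (-α) • Ring.inverse (A + θ • (1 : H →L[ℝ] H)))
        (Set.Ioi 0) volume ∧
      Aneg = (Real.sin (α * Real.pi) / Real.pi) •
        ∫ θ in Set.Ioi (0 : ℝ),
          θ ^ (-α) • Ring.inverse (A + θ • (1 : H →L[ℝ] H)) := by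
  -- eigenvalues are ≥ δ
  have hnorm : ∀ k, ‖e k‖ = 1 := fun k => e.orthonormal.1 k
  have hμδ : ∀ k, δ ≤ μ k := by
    intro k
    have h := hAδ (e k)
    rw [hAe k, real_inner_smul_left, real_inner_self_eq_norm_sq, hnorm k] at h
    simpa using h
  have hμpos : ∀ k, 0 < μ k := fun k => lt_of_lt_of_le hδ (hμδ k)
  -- basis extensionality for continuous linear maps
  have ext : ∀ (f g : H →L[ℝ] H), (∀ j, f (e j) = g (e j)) → f = g := by
    intro f g h
    ext x
    rw [← e.sum_repr x]
    simp [map_sum, _root_.map_smul, h]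
  -- rank-one projections
  set Q : Fin n → H →L[ℝ] H := fun k => (innerSL ℝ (e k)).smulRight (e k) with hQ
  have hQapp : ∀ k x, Q k x = ⟪e k, x⟫ • e k := fun k x => rfl
  have hinner : ∀ i j, ⟪e i, e j⟫ = if i = j then (1:ℝ) else 0 :=
    orthonormal_iff_ite.mp e.orthonormal
  have hQe : ∀ k j, Q k (e j) = if k = j then e k else 0 := by
    intro k j
    rw [hQapp, hinner]
    by_cases h : k = j <;> simp [h]
  -- the explicit inverse
  set B : ℝ → (H →L[ℝ] H) := fun θ => ∑ k, ((μ k + θ)⁻¹) • Q k with hB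
  have hBe : ∀ θ j, B θ (e j) = (μ j + θ)⁻¹ • e j := by
    intro θ j
    rw [hB]
    simp only [ContinuousLinearMap.sum_apply, ContinuousLinearMap.smul_apply, hQe]
    rw [Finset.sum_eq_single j]
    · simp
    · intro k _ hk
      simp [hk]
    · simp
  have hinv : ∀ θ : ℝ, 0 < θ →
      Ring.inverse (A + θ • (1 : H →L[ℝ] H)) = B θ := by
    intro θ hθ
    have hne : ∀ j, μ j + θ ≠ 0 := fun j => by have := hμpos j; positivity
    have h1 : (A + θ • (1 : H →L[ℝ] H)) * B θ = 1 := by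
      refine ext _ _ fun j => ?_
      show ((A + θ • (1 : H →L[ℝ] H)).comp (B θ)) (e j) = (1 : H →L[ℝ] H) (e j)
      rw [ContinuousLinearMap.comp_apply, hBe, ContinuousLinearMap.map_smul]
      have he : (A + θ • (1 : H →L[ℝ] H)) (e j) = (μ j + θ) • e j := by
        simp [hAe, add_smul]
      rw [he, smul_smul, inv_mul_cancel₀ (hne j), one_smul,
        ContinuousLinearMap.one_apply]
    have h2 : B θ * (A + θ • (1 : H →L[ℝ] H)) = 1 := by
      refine ext _ _ fun j => ?_
      show ((B θ).comp (A + θ • (1 : H →L[ℝ] H))) (e j) = (1 : H →L[ℝ] H) (e j)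
      have he : (A + θ • (1 : H →L[ℝ] H)) (e j) = (μ j + θ) • e j := by
        simp [hAe, add_smul]
      rw [ContinuousLinearMap.comp_apply, he, ContinuousLinearMap.map_smul, hBe,
        smul_smul, mul_inv_cancel₀ (hne j), one_smul, ContinuousLinearMap.one_apply]
    have hu : Ring.inverse ((⟨A + θ • 1, B θ, h1, h2⟩ : (H →L[ℝ] H)ˣ) :
        H →L[ℝ] H) = B θ := Ring.inverse_unit _
    exact hu
  -- the integrand as a finite sum
  have hFG : ∀ θ ∈ Set.Ioi (0:ℝ),
      θ ^ (-α) • Ring.inverse (A + θ • (1 : H →L[ℝ] H))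
        = ∑ k, (θ ^ (-α) * (μ k + θ)⁻¹) • Q k := by
    intro θ hθ
    rw [hinv θ hθ, hB, Finset.smul_sum]
    exact Finset.sum_congr rfl fun k _ => by rw [smul_smul]
  -- integrability of the sum
  have hGint : IntegrableOn
      (fun θ : ℝ => ∑ k, (θ ^ (-α) * (μ k + θ)⁻¹) • Q k) (Set.Ioi 0) volume := by
    refine integrable_finset_sum (f := fun k (θ : ℝ) => (θ ^ (-α) * (μ k + θ)⁻¹) • Q k) _ fun k _ => ?_
    exact (key_integrable hα (hμpos k)).smul_const (Q k)
  have hFint : IntegrableOn (fun θ : ℝ =>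
      θ ^ (-α) • Ring.inverse (A + θ • (1 : H →L[ℝ] H))) (Set.Ioi 0) volume :=
    hGint.congr_fun (fun θ hθ => (hFG θ hθ).symm) measurableSet_Ioi
  refine ⟨hFint, ?_⟩
  -- compute the integral
  have hint : ∫ θ in Set.Ioi (0:ℝ),
      θ ^ (-α) • Ring.inverse (A + θ • (1 : H →L[ℝ] H))
      = ∑ k, (μ k ^ (-α) * (π / Real.sin (π * α))) • Q k := by
    rw [setIntegral_congr_fun measurableSet_Ioi hFG,
      integral_finset_sum _ fun k _ => (key_integrable hα (hμpos k)).smul_const (Q k)]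
    refine Finset.sum_congr rfl fun k _ => ?_
    rw [integral_smul_const, key_value hα (hμpos k)]
  rw [hint, Finset.smul_sum]
  have hπ : Real.sin (π * α) ≠ 0 := by
    refine ne_of_gt (Real.sin_pos_of_pos_of_lt_pi ?_ ?_)
    · exact mul_pos Real.pi_pos hα.1
    · nlinarith [Real.pi_pos, hα.2]
  refine ext _ _ fun j => ?_
  rw [hAneg]
  simp only [ContinuousLinearMap.sum_apply, ContinuousLinearMap.smul_apply, hQe]
  rw [Finset.sum_eq_single j]
  · rw [if_pos rfl]
    have hc : Real.sin (α * π) / π * (μ j ^ (-α) * (π / Real.sin (π * α))) = μ j ^ (-α) := by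
      rw [mul_comm α π]
      field_simp
    rw [smul_smul, hc]
  · intro k _ hk
    simp [hk]
  · simp
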